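/- For every λ ∈ ℝ, the perturbation measure satisfies M_TV(λ) = (1 − 2 S(0;λ))/2, where S(0;λ) = ∫_{−∞}^0 2 f(x) G(λ ω(x)) dx is the cumulative distribution function of the skew-symmetric density evaluated at 0. Equivalently: sign(λ) · (1/2) ∫_ℝ |2 G(λ ω(x)) − 1| f(x) dx = 1/2 − ∫_{−∞}^0 2 f(x) G(λ ω(x)) dx. -/
import Mathlib


open MeasureTheory Real

/-- For every λ ∈ ℝ, the perturbation measure satisfies
M_TV(λ) = (1 − 2 S(0;λ))/2, where S(0;λ) is the cdf of the skew-symmetric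
density evaluated at 0. -/
theorem skew_symmetric_MTV_closed_form
    (f G ω : ℝ → ℝ)
    (hf_meas : Measurable f) (hf_nonneg : ∀ x, 0 ≤ f x)
    (hf_int : Integrable f) (hf_one : ∫ x, f x = 1)
    (hf_even : ∀ x, f (-x) = f x)
    (hG_meas : Measurable G) (hG_mono : Monotone G)
    (hG_range : ∀ t, G t ∈ Set.Icc (0 : ℝ) 1)
    (hG_symm : ∀ t, G (-t) = 1 - G t)
    (hG_zero : G 0 = 1 / 2)
    (hω_meas : Measurable ω)
    (hω_odd : ∀ x, ω (-x) = -ω x)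
    (hω_nonneg : ∀ x, 0 ≤ x → 0 ≤ ω x)
    (l : ℝ) :
    Real.sign l * ((1 / 2) * ∫ x, |2 * G (l * ω x) - 1| * f x)
      = 1 / 2 - ∫ x in Set.Iic (0 : ℝ), 2 * f x * G (l * ω x) := by
  have hGω_meas : Measurable (fun x => G (l * ω x)) :=
    hG_meas.comp (measurable_const.mul hω_meas)
  have habs : ∀ x, |2 * G (l * ω x) - 1| ≤ 1 := by
    intro x
    rcases hG_range (l * ω x) with ⟨h0, h1⟩
    rw [abs_le]; constructor <;> linarith
  -- integrability
  have hint_g : Integrable (fun x => |2 * G (l * ω x) - 1| * f x) := by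
    refine hf_int.mono ?_ ?_
    · exact (((measurable_const.mul hGω_meas).sub measurable_const).abs.mul
        hf_meas).aestronglyMeasurable
    · filter_upwards with x
      have h1 := habs x
      have h2 := hf_nonneg x
      simp only [Real.norm_eq_abs]
      rw [abs_of_nonneg (mul_nonneg (abs_nonneg _) h2), abs_of_nonneg h2]
      nlinarith [abs_nonneg (2 * G (l * ω x) - 1)]
  have hint_2fG : Integrable (fun x => 2 * f x * G (l * ω x)) := by
    refine (hf_int.const_mul 2).mono ?_ ?_
    · exact ((measurable_const.mul hf_meas).mul hGω_meas).aestronglyMeasurable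
    · filter_upwards with x
      rcases hG_range (l * ω x) with ⟨h0, h1⟩
      have h2 := hf_nonneg x
      simp only [Real.norm_eq_abs]
      rw [abs_of_nonneg (by positivity), abs_of_nonneg (by positivity)]
      nlinarith
  -- ω is nonpositive on Iic 0
  have hω_nonpos : ∀ x : ℝ, x ≤ 0 → ω x ≤ 0 := by
    intro x hx
    have h := hω_nonneg (-x) (by linarith)
    have h2 := hω_odd (-x)
    rw [neg_neg] at h2
    linarith
  -- evenness of the absolute integrand
  have h_even_g : ∀ x, |2 * G (l * ω (-x)) - 1| * f (-x)
      = |2 * G (l * ω x) - 1| * f x := by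
    intro x
    rw [hω_odd, hf_even, show l * -ω x = -(l * ω x) by ring, hG_symm,
      show (2 * (1 - G (l * ω x)) - 1) = -(2 * G (l * ω x) - 1) by ring, abs_neg]
  -- evenness of f gives ∫_{Iic 0} f = 1/2
  have hf_half : ∫ x in Set.Iic (0 : ℝ), f x = 1 / 2 := by
    have h1 := intervalIntegral.integral_Iic_add_Ioi (b := (0:ℝ)) (μ := volume)
      hf_int.integrableOn hf_int.integrableOn
    rw [hf_one] at h1
    have h2 : ∫ x in Set.Ioi (0 : ℝ), f x = ∫ x in Set.Iic (0 : ℝ), f x := by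
      have := integral_comp_neg_Ioi (0 : ℝ) f
      rw [neg_zero] at this
      rw [← this]
      exact setIntegral_congr_fun measurableSet_Ioi fun x _ => (hf_even x).symm
    linarith
  -- the full integral is twice the Iic-part
  have h_double : ∫ x, |2 * G (l * ω x) - 1| * f x
      = 2 * ∫ x in Set.Iic (0 : ℝ), |2 * G (l * ω x) - 1| * f x := by
    have h1 := intervalIntegral.integral_Iic_add_Ioi (b := (0:ℝ)) (μ := volume)
      hint_g.integrableOn hint_g.integrableOn
    have h2 : ∫ x in Set.Ioi (0 : ℝ), |2 * G (l * ω x) - 1| * f x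
        = ∫ x in Set.Iic (0 : ℝ), |2 * G (l * ω x) - 1| * f x := by
      have h3 := integral_comp_neg_Ioi (0 : ℝ) (fun x => |2 * G (l * ω x) - 1| * f x)
      rw [neg_zero] at h3
      rw [← h3]
      exact setIntegral_congr_fun measurableSet_Ioi fun x _ => (h_even_g x).symm
    linarith
  -- key sub-integral identity for l ≠ 0
  rcases lt_trichotomy l 0 with hl | hl | hl
  · -- l < 0 : on Iic 0, l*ω x ≥ 0 so |2G-1| = 2G-1
    have hIic : ∫ x in Set.Iic (0 : ℝ), |2 * G (l * ω x) - 1| * f x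
        = (∫ x in Set.Iic (0 : ℝ), 2 * f x * G (l * ω x)) - 1 / 2 := by
      have hcong : ∫ x in Set.Iic (0 : ℝ), |2 * G (l * ω x) - 1| * f x
          = ∫ x in Set.Iic (0 : ℝ), (2 * f x * G (l * ω x) - f x) := by
        refine setIntegral_congr_fun measurableSet_Iic fun x hx => ?_
        have hω0 : 0 ≤ l * ω x := by nlinarith [hω_nonpos x hx, hl.le]
        have hG : 1 / 2 ≤ G (l * ω x) := hG_zero ▸ hG_mono hω0
        rw [abs_of_nonneg (by linarith)]; ring
      rw [hcong, integral_sub hint_2fG.integrableOn hf_int.integrableOn, hf_half]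
    rw [Real.sign_of_neg hl, h_double, hIic]
    ring
  · subst hl
    simp only [Real.sign_zero, zero_mul, zero_mul, hG_zero]
    have : ∫ x in Set.Iic (0 : ℝ), 2 * f x * (1 / 2 : ℝ)
        = ∫ x in Set.Iic (0 : ℝ), f x := by
      refine setIntegral_congr_fun measurableSet_Iic fun x _ => by ring
    rw [this, hf_half]
    norm_num
  · -- l > 0 : on Iic 0, l*ω x ≤ 0 so |2G-1| = 1-2G
    have hIic : ∫ x in Set.Iic (0 : ℝ), |2 * G (l * ω x) - 1| * f x
        = 1 / 2 - ∫ x in Set.Iic (0 : ℝ), 2 * f x * G (l * ω x) := by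
      have hcong : ∫ x in Set.Iic (0 : ℝ), |2 * G (l * ω x) - 1| * f x
          = ∫ x in Set.Iic (0 : ℝ), (f x - 2 * f x * G (l * ω x)) := by
        refine setIntegral_congr_fun measurableSet_Iic fun x hx => ?_
        have hω0 : l * ω x ≤ 0 := mul_nonpos_of_nonneg_of_nonpos hl.le (hω_nonpos x hx)
        have hG : G (l * ω x) ≤ 1 / 2 := hG_zero ▸ hG_mono hω0
        rw [abs_of_nonpos (by linarith)]; ring
      rw [hcong, integral_sub hf_int.integrableOn hint_2fG.integrableOn, hf_half]
    rw [Real.sign_of_pos hl, h_double, hIic]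
    ring
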